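/- Let f : [0,∞) → [0,∞) be decreasing and let S, ξ be random variables with ξ ≤ S a.s. and S ≥ 0 a.s. Then for every λ > 0, ∫₀^∞ e^{−λx} x E[1_{{S<x}} f(x−ξ)] dx ≤ E[e^{−λS}] ∫₀^∞ e^{−λx} x f(x) dx + E[S e^{−λS}] ∫₀^∞ e^{−λx} f(x) dx. -/

import Mathlib

open MeasureTheory
lemma shift_lintegral (c : ℝ) (g : ℝ → ENNReal) :
    ∫⁻ x in Set.Ioi c, g x = ∫⁻ y in Set.Ioi (0:ℝ), g (y + c) := by
  have h := (measurePreserving_add_right volume c).setLIntegral_comp_preimage_emb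
    (MeasurableEquiv.addRight c).measurableEmbedding g (Set.Ioi c)
  have hpre : (· + c) ⁻¹' Set.Ioi c = Set.Ioi (0:ℝ) := by
    ext y; simp [Set.mem_Ioi]
  rw [hpre] at h
  exact h.symm

/-- for `f : [0,∞) → [0,∞)` decreasing and random variables `ξ ≤ S` a.s.,
`S ≥ 0` a.s., for every `λ > 0`:
`∫₀^∞ e^{-λx} x E[1_{S<x} f(x-ξ)] dx ≤ E[e^{-λS}] ∫₀^∞ e^{-λx} x f(x) dx
   + E[S e^{-λS}] ∫₀^∞ e^{-λx} f(x) dx`. -/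
theorem stmt_7 {Ω : Type*} [MeasurableSpace Ω] (P : Measure Ω) [IsProbabilityMeasure P]
    (f : ℝ → ℝ) (hf_meas : Measurable f)
    (hf_nonneg : ∀ x ≥ (0 : ℝ), 0 ≤ f x)
    (hf_anti : AntitoneOn f (Set.Ici 0))
    (S ξ : Ω → ℝ) (hS : Measurable S) (hξ : Measurable ξ)
    (h_le : ∀ᵐ ω ∂P, ξ ω ≤ S ω) (hS0 : ∀ᵐ ω ∂P, 0 ≤ S ω)
    (l : ℝ) (hl : 0 < l) :
    (∫⁻ x in Set.Ioi (0 : ℝ),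
        ENNReal.ofReal (Real.exp (-l * x) * x) *
          ∫⁻ ω, Set.indicator {ω | S ω < x}
            (fun ω => ENNReal.ofReal (f (x - ξ ω))) ω ∂P)
      ≤ (∫⁻ ω, ENNReal.ofReal (Real.exp (-l * S ω)) ∂P) *
          (∫⁻ x in Set.Ioi (0 : ℝ), ENNReal.ofReal (Real.exp (-l * x) * x * f x))
        + (∫⁻ ω, ENNReal.ofReal (S ω * Real.exp (-l * S ω)) ∂P) *
            ∫⁻ x in Set.Ioi (0 : ℝ), ENNReal.ofReal (Real.exp (-l * x) * f x) := by
  set A := ∫⁻ x in Set.Ioi (0 : ℝ), ENNReal.ofReal (Real.exp (-l * x) * x * f x) with hA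
  set B := ∫⁻ x in Set.Ioi (0 : ℝ), ENNReal.ofReal (Real.exp (-l * x) * f x) with hB
  -- measurability of the comparison integrand on the product space
  have hFmeas : Measurable (fun p : ℝ × Ω =>
      ENNReal.ofReal (Real.exp (-l * p.1) * p.1 * f (p.1 - S p.2))) := by
    apply Measurable.ennreal_ofReal
    exact (((measurable_fst.const_mul (-l)).exp.mul measurable_fst).mul
      (hf_meas.comp (measurable_fst.sub (hS.comp measurable_snd))))
  have hsetmeas : MeasurableSet {p : ℝ × Ω | S p.2 < p.1} :=
    measurableSet_lt (hS.comp measurable_snd) measurable_fst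
  set G : ℝ × Ω → ENNReal :=
    Set.indicator {p : ℝ × Ω | S p.2 < p.1}
      (fun p => ENNReal.ofReal (Real.exp (-l * p.1) * p.1 * f (p.1 - S p.2))) with hG
  have hGmeas : Measurable G := hFmeas.indicator hsetmeas
  -- Step 1: bound LHS by the double integral of G
  have step1 : (∫⁻ x in Set.Ioi (0 : ℝ),
        ENNReal.ofReal (Real.exp (-l * x) * x) *
          ∫⁻ ω, Set.indicator {ω | S ω < x}
            (fun ω => ENNReal.ofReal (f (x - ξ ω))) ω ∂P)
      ≤ ∫⁻ x in Set.Ioi (0 : ℝ), ∫⁻ ω, G (x, ω) ∂P := by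
    apply setLIntegral_mono_ae' measurableSet_Ioi
    filter_upwards with x hx
    have hx0 : (0:ℝ) < x := hx
    have hinner : Measurable fun ω => ENNReal.ofReal (f (x - ξ ω)) :=
      (hf_meas.comp (measurable_const.sub hξ)).ennreal_ofReal
    rw [← lintegral_const_mul _ (hinner.indicator (measurableSet_lt hS measurable_const))]
    apply lintegral_mono_ae
    filter_upwards [h_le, hS0] with ω hξS hSnn
    by_cases hcond : S ω < x
    · simp only [hG, Set.indicator_apply, Set.mem_setOf_eq, hcond, if_true]
      rw [← ENNReal.ofReal_mul (by positivity)]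
      apply ENNReal.ofReal_le_ofReal
      have h1 : (0:ℝ) ≤ x - S ω := by linarith
      have h2 : x - S ω ≤ x - ξ ω := by linarith
      have hmono := hf_anti (Set.mem_Ici.2 h1) (Set.mem_Ici.2 (le_trans h1 h2)) h2
      calc Real.exp (-l*x) * x * f (x - ξ ω) ≤ Real.exp (-l*x) * x * f (x - S ω) := by
            apply mul_le_mul_of_nonneg_left hmono (by positivity)
        _ = _ := by ring
    · simp [hG, Set.indicator_apply, Set.mem_setOf_eq, hcond]
  refine le_trans step1 ?_
  -- Step 2: Tonelli swap
  have hswap := lintegral_lintegral_swap (μ := volume.restrict (Set.Ioi (0:ℝ))) (ν := P)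
    (f := fun x ω => G (x, ω)) hGmeas.aemeasurable
  rw [hswap]
  -- Step 3: compute the inner integral for a.e. ω
  have step3 : ∀ᵐ ω ∂P, (∫⁻ x in Set.Ioi (0:ℝ), G (x, ω)) =
      ENNReal.ofReal (Real.exp (-l * S ω)) * A
        + ENNReal.ofReal (S ω * Real.exp (-l * S ω)) * B := by
    filter_upwards [hS0] with ω hSnn
    have h1 : (∫⁻ x in Set.Ioi (0:ℝ), G (x, ω)) =
        ∫⁻ x in Set.Ioi (S ω), ENNReal.ofReal (Real.exp (-l * x) * x * f (x - S ω)) := by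
      have : ∀ x, G (x, ω) = Set.indicator (Set.Ioi (S ω))
          (fun x => ENNReal.ofReal (Real.exp (-l * x) * x * f (x - S ω))) x := by
        intro x
        by_cases hcond : S ω < x <;>
          simp [hG, Set.indicator_apply, Set.mem_Ioi, hcond]
      simp_rw [this]
      rw [lintegral_indicator measurableSet_Ioi, Measure.restrict_restrict measurableSet_Ioi,
        Set.inter_eq_self_of_subset_left (Set.Ioi_subset_Ioi hSnn)]
    rw [h1, shift_lintegral]
    have h2 : ∀ y ∈ Set.Ioi (0:ℝ),
        ENNReal.ofReal (Real.exp (-l * (y + S ω)) * (y + S ω) * f (y + S ω - S ω)) =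
        ENNReal.ofReal (Real.exp (-l * S ω)) * ENNReal.ofReal (Real.exp (-l * y) * y * f y)
          + ENNReal.ofReal (S ω * Real.exp (-l * S ω)) *
              ENNReal.ofReal (Real.exp (-l * y) * f y) := by
      intro y hy
      have hy0 : (0:ℝ) < y := hy
      have hfy : 0 ≤ f y := hf_nonneg y hy0.le
      rw [← ENNReal.ofReal_mul (by positivity), ← ENNReal.ofReal_mul (by positivity),
        ← ENNReal.ofReal_add (by positivity) (by positivity)]
      congr 1
      rw [show y + S ω - S ω = y by ring,
        show -l * (y + S ω) = -l * y + -l * S ω by ring, Real.exp_add]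
      ring
    rw [setLIntegral_congr_fun measurableSet_Ioi h2]
    rw [lintegral_add_left (by fun_prop)]
    rw [lintegral_const_mul _ (by fun_prop), lintegral_const_mul _ (by fun_prop)]
  rw [lintegral_congr_ae step3]
  rw [lintegral_add_left (by fun_prop)]
  rw [lintegral_mul_const _ (by fun_prop), lintegral_mul_const _ (by fun_prop)]
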